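/- Let n ≥ 1, let p be an integer with 1 ≤ p ≤ n, let A and D be n×n real matrices, and suppose x ∈ ℝⁿ satisfies x_i − x_j ≥ D(i,j) for all i, j and (A ⊗_p x)_i = λ + x_i for all i, where λ ∈ ℝ. Define L(i,j) := ⊕_p(l ↦ A(i,l) + D(l,j)) and U(i,j) := ⊕_p(l ↦ A(i,l) − D(j,l)). Then max{L(1,1), …, L(n,n)} ≤ λ ≤ min{U(1,1), …, U(n,n)}. -/

import Mathlib

/-- The maxmin-`p` value of `s : Fin n → ℝ`: the `p`-th smallest element (1-indexed) of the
multiset `{s 0, …, s (n-1)}`, counted with multiplicity. -/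
noncomputable def maxmin {n : ℕ} (p : ℕ) (s : Fin n → ℝ) : ℝ :=
  (Multiset.sort (Multiset.map s (Finset.univ : Finset (Fin n)).val) (· ≤ ·)).getD (p - 1) 0

/-- The maxmin-`p` matrix-vector product: `(A ⊗_p x)_i = ⊕_p (j ↦ A i j + x j)`. -/
noncomputable def mmProd {n : ℕ} (p : ℕ) (A : Fin n → Fin n → ℝ) (x : Fin n → ℝ) :
    Fin n → ℝ :=
  fun i => maxmin p (fun j => A i j + x j)

/-- Bounds on the eigenvalue: if `x` lies in the zone of a real DBM `D` and is a maxmin-`p`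
eigenvector with eigenvalue `λ`, then with `L i j := ⊕_p(l ↦ A i l + D l j)` and
`U i j := ⊕_p(l ↦ A i l − D j l)` we have
`max_i L i i ≤ λ ≤ min_i U i i`. -/
lemma sorted_getD_le_iff (l : List ℝ) (hl : l.Pairwise (· ≤ ·)) (k : ℕ) (hk : k < l.length)
    (x : ℝ) : l.getD k 0 ≤ x ↔ k + 1 ≤ l.countP (fun a => decide (a ≤ x)) := by
  rw [List.getD_eq_getElem l 0 hk]
  constructor
  · intro h
    calc k + 1 = (l.take (k+1)).countP (fun a => decide (a ≤ x)) := by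
          rw [List.countP_eq_length_filter, List.filter_eq_self.2, List.length_take]
          · omega
          · intro a ha
            rw [List.mem_take_iff_getElem] at ha
            obtain ⟨i, hi, rfl⟩ := ha
            simp only [decide_eq_true_eq]
            have : l[i] ≤ l[k] := by
              have := hl.rel_get_of_le (a := ⟨i, by omega⟩) (b := ⟨k, hk⟩) (by simp; omega)
              simpa using this
            linarith
      _ ≤ l.countP (fun a => decide (a ≤ x)) := by
          conv_rhs => rw [← List.take_append_drop (k+1) l]
          rw [List.countP_append]; omega
  · intro h
    by_contra hx
    push_neg at hx
    have : l.countP (fun a => decide (a ≤ x)) ≤ k := by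
      conv_lhs => rw [← List.take_append_drop k l]
      rw [List.countP_append]
      have h1 : (l.take k).countP (fun a => decide (a ≤ x)) ≤ k := by
        calc _ ≤ (l.take k).length := List.countP_le_length
          _ ≤ k := by rw [List.length_take]; omega
      have h2 : (l.drop k).countP (fun a => decide (a ≤ x)) = 0 := by
        rw [List.countP_eq_zero]
        intro a ha
        rw [List.mem_iff_getElem] at ha
        obtain ⟨i, hi, rfl⟩ := ha
        have hki : k + i < l.length := by rw [List.length_drop] at hi; omega
        rw [List.getElem_drop (h := hi)]
        simp only [decide_eq_true_eq, not_le]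
        have : l[k] ≤ l[k+i] := by
          have := hl.rel_get_of_le (a := ⟨k, hk⟩) (b := ⟨k+i, by
            have := (List.length_drop (i := k) (l := l)) ▸ hi; omega⟩) (by simp)
          simpa using this
        linarith
      omega
    omega

lemma maxmin_le_iff {n : ℕ} (p : ℕ) (hp1 : 1 ≤ p) (hpn : p ≤ n) (s : Fin n → ℝ) (x : ℝ) :
    maxmin p s ≤ x ↔ p ≤ (Finset.univ.filter (fun j => s j ≤ x)).card := by
  have hlen : (Multiset.sort (Multiset.map s (Finset.univ : Finset (Fin n)).val) (· ≤ ·)).length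
      = n := by
    rw [Multiset.length_sort, Multiset.card_map]; simp
  rw [maxmin, sorted_getD_le_iff _ (Multiset.pairwise_sort _ _) _ (by omega)]
  · have : (Multiset.sort (Multiset.map s (Finset.univ : Finset (Fin n)).val) (· ≤ ·)).countP
        (fun a => decide (a ≤ x)) = (Finset.univ.filter (fun j => s j ≤ x)).card := by
      have := Multiset.sort_eq (Multiset.map s (Finset.univ : Finset (Fin n)).val) (· ≤ ·)
      rw [← Multiset.coe_countP, this, Multiset.countP_map]
      rfl
    rw [this]
    omega

lemma maxmin_mono {n : ℕ} (p : ℕ) (hp1 : 1 ≤ p) (hpn : p ≤ n) {s t : Fin n → ℝ}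
    (h : ∀ j, s j ≤ t j) : maxmin p s ≤ maxmin p t := by
  rw [maxmin_le_iff p hp1 hpn]
  have := (maxmin_le_iff p hp1 hpn t (maxmin p t)).1 le_rfl
  refine le_trans this (Finset.card_le_card ?_)
  intro j hj
  simp only [Finset.mem_filter] at *
  exact ⟨hj.1, le_trans (h j) hj.2⟩

lemma maxmin_add_const {n : ℕ} (p : ℕ) (hp1 : 1 ≤ p) (hpn : p ≤ n) (s : Fin n → ℝ) (c : ℝ) :
    maxmin p (fun j => s j + c) = maxmin p s + c := by
  have key : ∀ y : ℝ, maxmin p (fun j => s j + c) ≤ y + c ↔ maxmin p s ≤ y := by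
    intro y
    rw [maxmin_le_iff p hp1 hpn, maxmin_le_iff p hp1 hpn]
    have : ∀ j, (s j + c ≤ y + c) ↔ (s j ≤ y) := fun j => by constructor <;> intro h <;> linarith
    simp only [this]
  have h1 : maxmin p (fun j => s j + c) ≤ maxmin p s + c := (key _).2 le_rfl
  have h2 : maxmin p s ≤ maxmin p (fun j => s j + c) - c :=
    (key _).1 (by linarith)
  linarith

theorem eigenvalue_bounds (n p : ℕ) (hn : 1 ≤ n) (hp1 : 1 ≤ p) (hpn : p ≤ n)
    (A D : Fin n → Fin n → ℝ) (x : Fin n → ℝ) (lam : ℝ)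
    (hzone : ∀ i j, x i - x j ≥ D i j)
    (heig : ∀ i, mmProd p A x i = lam + x i) :
    (Finset.univ : Finset (Fin n)).sup' ⟨⟨0, hn⟩, Finset.mem_univ _⟩
        (fun i => maxmin p (fun l => A i l + D l i)) ≤ lam ∧
      lam ≤ (Finset.univ : Finset (Fin n)).inf' ⟨⟨0, hn⟩, Finset.mem_univ _⟩
        (fun i => maxmin p (fun l => A i l - D i l)) := by
  have key : ∀ i, maxmin p (fun l => A i l + (x l - x i)) = lam := by
    intro i
    have : (fun l => A i l + (x l - x i)) = fun l => (A i l + x l) + (-x i) := by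
      funext l; ring
    rw [this, maxmin_add_const p hp1 hpn]
    have := heig i
    rw [mmProd] at this
    rw [this]; ring
  constructor
  · apply Finset.sup'_le
    intro i _
    rw [← key i]
    exact maxmin_mono p hp1 hpn (fun l => by have := hzone l i; linarith)
  · apply Finset.le_inf'
    intro i _
    rw [← key i]
    exact maxmin_mono p hp1 hpn (fun l => by have := hzone i l; linarith)
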